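/- Let ω ∈ (−1,1) with ω ≠ 0, let φ_ω(x) = √(2(1−ω²)) · sech(√(1−ω²)·x), φ₀ = φ_{ω=0}, and define the quadratic form B(ξ,η,ζ) = ∫_ℝ ( |ξ'|² + |ξ|² + |η|² + ½ζ² − φ_ω²|ξ|² + 2φ_ω·ζ·(Re ξ) − 2ω·Im(η·conj(ξ)) ) dx for ξ ∈ H¹(ℝ,ℂ), η ∈ L²(ℝ,ℂ), ζ ∈ L²(ℝ,ℝ). Let F_ω = (∂_ωφ_ω, iω·∂_ωφ_ω, −2φ_ω·∂_ωφ_ω), where ∂_ωφ_ω is the partial derivative of the soliton family in ω. Then B(F_ω) = ω·(d/dω)∫φ_ω² = −(ω²/√(1−ω²))·∫φ₀², and in particular B(F_ω) < 0. -/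

import Mathlib

open Real Set MeasureTheory Complex

/-- The ground-state soliton of the KGZ standing-wave equation. -/
noncomputable def phiSol (ω : ℝ) (x : ℝ) : ℝ :=
  Real.sqrt (2 * (1 - ω ^ 2)) * (1 / Real.cosh (Real.sqrt (1 - ω ^ 2) * x))

open Filter Topology

lemma cosh_quad (y : ℝ) : 1 + y ^ 2 / 4 ≤ Real.cosh y := by
  wlog h : 0 ≤ y generalizing y
  · have := this (-y) (by linarith)
    simpa [Real.cosh_neg] using this
  rw [Real.cosh_eq]
  nlinarith [Real.quadratic_le_exp_of_nonneg h, Real.add_one_le_exp (-y), Real.exp_pos (-y)]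

lemma exp_le_two_cosh (y : ℝ) : Real.exp y ≤ 2 * Real.cosh y := by
  rw [Real.cosh_eq]; nlinarith [Real.exp_pos (-y)]

lemma inv_cosh_le (y : ℝ) : (Real.cosh y)⁻¹ ≤ 2 * Real.exp (-y) := by
  have hc := Real.cosh_pos y
  have h2 := Real.exp_pos y
  have h := exp_le_two_cosh y
  have : (1:ℝ)/Real.cosh y ≤ 2/Real.exp y := by
    rw [div_le_div_iff₀ hc h2]; nlinarith
  simpa [Real.exp_neg, one_div, div_eq_mul_inv] using this

lemma tendsto_inv_cosh_atTop : Tendsto (fun y : ℝ => (Real.cosh y)⁻¹) atTop (𝓝 0) := by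
  apply squeeze_zero (fun t => by positivity) (fun t => inv_cosh_le t)
  simpa using (Real.tendsto_exp_neg_atTop_nhds_zero).const_mul 2

lemma tendsto_mul_inv_cosh_atTop : Tendsto (fun y : ℝ => y * (Real.cosh y)⁻¹) atTop (𝓝 0) := by
  apply squeeze_zero' (g := fun y => 2 * (y * Real.exp (-y)))
  · filter_upwards [eventually_ge_atTop (0:ℝ)] with y hy
    positivity
  · filter_upwards [eventually_ge_atTop (0:ℝ)] with y hy
    calc y * (Real.cosh y)⁻¹ ≤ y * (2 * Real.exp (-y)) :=
          mul_le_mul_of_nonneg_left (inv_cosh_le y) hy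
    _ = 2 * (y * Real.exp (-y)) := by ring
  · have := (tendsto_pow_mul_exp_neg_atTop_nhds_zero 1).const_mul 2
    simpa [Real.exp_neg, div_eq_mul_inv] using this

lemma tendsto_sinh_div_cosh_atTop :
    Tendsto (fun y : ℝ => Real.sinh y / Real.cosh y) atTop (𝓝 1) := by
  have h1 : ∀ y : ℝ, Real.sinh y / Real.cosh y = 1 - Real.exp (-y) * (Real.cosh y)⁻¹ := by
    intro y
    have hc := (Real.cosh_pos y).ne'
    rw [Real.sinh_eq, Real.cosh_eq] at *
    field_simp
    ring
  simp only [h1]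
  have h2 : Tendsto (fun y : ℝ => Real.exp (-y) * (Real.cosh y)⁻¹) atTop (𝓝 0) := by
    have := (Real.tendsto_exp_neg_atTop_nhds_zero).mul tendsto_inv_cosh_atTop
    simpa using this
  simpa using tendsto_const_nhds.sub h2

lemma tendsto_inv_cosh_atBot : Tendsto (fun y : ℝ => (Real.cosh y)⁻¹) atBot (𝓝 0) := by
  have := tendsto_inv_cosh_atTop.comp tendsto_neg_atBot_atTop
  simpa [Function.comp_def, Real.cosh_neg] using this

lemma tendsto_mul_inv_cosh_atBot : Tendsto (fun y : ℝ => y * (Real.cosh y)⁻¹) atBot (𝓝 0) := by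
  have := (tendsto_mul_inv_cosh_atTop.comp tendsto_neg_atBot_atTop).neg
  simp only [Function.comp_def, Real.cosh_neg, neg_zero] at this
  refine this.congr fun y => by ring

lemma tendsto_sinh_div_cosh_atBot :
    Tendsto (fun y : ℝ => Real.sinh y / Real.cosh y) atBot (𝓝 (-1)) := by
  have := (tendsto_sinh_div_cosh_atTop.comp tendsto_neg_atBot_atTop).neg
  simp only [Function.comp_def, Real.cosh_neg, Real.sinh_neg] at this
  refine this.congr fun y => by ring


lemma hasDerivAt_tanhlike (κ x : ℝ) :
    HasDerivAt (fun x : ℝ => Real.sinh (κ*x) / Real.cosh (κ*x))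
      (κ * ((Real.cosh (κ*x))⁻¹)^2) x := by
  have hx : HasDerivAt (fun x : ℝ => κ*x) κ x := by
    simpa using (hasDerivAt_id x).const_mul κ
  have hs := hx.sinh
  have hc := hx.cosh
  have := hs.div hc (Real.cosh_pos _).ne'
  refine this.congr_deriv (Eq.symm ?_)
  have h := Real.cosh_sq_sub_sinh_sq (κ*x)
  have hcp := (Real.cosh_pos (κ*x)).ne'
  field_simp
  linear_combination (-κ) * h

lemma integral_phiSol_sq (μ : ℝ) :
    ∫ x : ℝ, (phiSol μ x) ^ 2 = 4 * Real.sqrt (1 - μ ^ 2) := by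
  rcases le_or_gt (1 - μ^2) 0 with h | h
  · have h2 : Real.sqrt (2*(1-μ^2)) = 0 := Real.sqrt_eq_zero'.mpr (by linarith)
    have h3 : Real.sqrt (1-μ^2) = 0 := Real.sqrt_eq_zero'.mpr h
    simp [phiSol, h2, h3]
  · set κ := Real.sqrt (1-μ^2) with hκdef
    have hκ : 0 < κ := Real.sqrt_pos.mpr h
    have hκ2 : κ^2 = 1-μ^2 := Real.sq_sqrt h.le
    have hκ1 : κ ≤ 1 := by nlinarith
    have hpt : ∀ x : ℝ, (phiSol μ x)^2 = 2*κ^2*((Real.cosh (κ*x))⁻¹)^2 := by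
      intro x
      have hsq : Real.sqrt (2*(1-μ^2)) ^ 2 = 2*(1-μ^2) := Real.sq_sqrt (by linarith)
      simp only [phiSol, ← hκdef, mul_pow, hsq, one_div]
      rw [← hκ2]
    have hder : ∀ x : ℝ, HasDerivAt (fun x : ℝ => 2*κ*(Real.sinh (κ*x)/Real.cosh (κ*x)))
        (2*κ^2*((Real.cosh (κ*x))⁻¹)^2) x := by
      intro x
      have := (hasDerivAt_tanhlike κ x).const_mul (2*κ)
      refine this.congr_deriv (Eq.symm ?_); ring
    have hint : Integrable (fun x : ℝ => 2*κ^2*((Real.cosh (κ*x))⁻¹)^2) := by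
      apply Integrable.mono' (g := fun x : ℝ => 8 * (1+x^2)⁻¹)
          (integrable_inv_one_add_sq.const_mul 8)
      · refine Continuous.aestronglyMeasurable ?_
        have hcont : Continuous fun x : ℝ => Real.cosh (κ*x) :=
          Real.continuous_cosh.comp (continuous_const.mul continuous_id)
        exact (continuous_const.mul ((hcont.inv₀ fun x => (Real.cosh_pos _).ne').pow 2))
      · refine Eventually.of_forall fun x => ?_
        have hc1 : 1 ≤ Real.cosh (κ*x) := Real.one_le_cosh _
        have hq : 1 + (κ*x)^2/4 ≤ Real.cosh (κ*x) := cosh_quad _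
        rw [norm_of_nonneg (by positivity), inv_pow, ← div_eq_mul_inv, ← div_eq_mul_inv,
          div_le_div_iff₀ (by positivity) (by positivity)]
        nlinarith [sq_nonneg (κ*x), sq_nonneg x]
    have hbot : Tendsto (fun x : ℝ => 2*κ*(Real.sinh (κ*x)/Real.cosh (κ*x))) atBot
        (𝓝 (2*κ*(-1))) := by
      have hin : Tendsto (fun x : ℝ => κ*x) atBot atBot := tendsto_id.const_mul_atBot hκ
      exact (tendsto_sinh_div_cosh_atBot.comp hin).const_mul _
    have htop : Tendsto (fun x : ℝ => 2*κ*(Real.sinh (κ*x)/Real.cosh (κ*x))) atTop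
        (𝓝 (2*κ*1)) := by
      have hin : Tendsto (fun x : ℝ => κ*x) atTop atTop := tendsto_id.const_mul_atTop hκ
      exact (tendsto_sinh_div_cosh_atTop.comp hin).const_mul _
    calc ∫ x : ℝ, (phiSol μ x)^2 = ∫ x : ℝ, 2*κ^2*((Real.cosh (κ*x))⁻¹)^2 :=
          integral_congr_ae (Eventually.of_forall hpt)
    _ = 2*κ*1 - 2*κ*(-1) := integral_of_hasDerivAt_of_tendsto hder hint hbot htop
    _ = 4*κ := by ring


noncomputable def auxD (c k : ℝ) (x : ℝ) : ℝ :=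
  c * (k*x*Real.sinh (k*x) - Real.cosh (k*x)) / (Real.cosh (k*x))^2

noncomputable def auxDd (c k : ℝ) (x : ℝ) : ℝ :=
  c * k * (k*x*(Real.cosh (k*x))^2 - 2*(k*x)*(Real.sinh (k*x))^2
    + 2*Real.sinh (k*x)*Real.cosh (k*x)) / (Real.cosh (k*x))^3

noncomputable def auxf (c k : ℝ) (x : ℝ) : ℝ :=
  (auxDd c k x)^2 + (k^2 - 6*k^2/(Real.cosh (k*x))^2)*(auxD c k x)^2

noncomputable def auxH (c k : ℝ) (x : ℝ) : ℝ :=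
  auxDd c k x * auxD c k x
    - c^2*k*(Real.sinh (k*x)/Real.cosh (k*x) + k*x/(Real.cosh (k*x))^2)

lemma hasDerivAt_kx (k x : ℝ) : HasDerivAt (fun x : ℝ => k*x) k x := by
  simpa using (hasDerivAt_id x).const_mul k

lemma hasDerivAt_auxD (c k : ℝ) (x : ℝ) : HasDerivAt (auxD c k) (auxDd c k x) x := by
  have hx := hasDerivAt_kx k x
  have hS := hx.sinh
  have hC := hx.cosh
  have hcp := (Real.cosh_pos (k*x)).ne'
  have hnum : HasDerivAt (fun x : ℝ => c * (k*x*Real.sinh (k*x) - Real.cosh (k*x)))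
      (c * ((k*Real.sinh (k*x) + k*x*(Real.cosh (k*x)*k)) - Real.sinh (k*x)*k)) x :=
    ((hx.mul hS).sub hC).const_mul c
  have hden : HasDerivAt (fun x : ℝ => (Real.cosh (k*x))^2)
      (2*(Real.cosh (k*x))^1*(Real.sinh (k*x)*k)) x := hC.pow 2
  have := hnum.div hden (by positivity)
  refine this.congr_deriv (Eq.symm ?_)
  unfold auxDd
  field_simp
  ring

lemma hasDerivAt_auxDd (c k : ℝ) (x : ℝ) :
    HasDerivAt (auxDd c k)
      ((k^2 - 6*k^2/(Real.cosh (k*x))^2) * auxD c k x - 2*c*k^2/Real.cosh (k*x)) x := by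
  have hx := hasDerivAt_kx k x
  have hS := hx.sinh
  have hC := hx.cosh
  have hcp := (Real.cosh_pos (k*x)).ne'
  have hnum : HasDerivAt (fun x : ℝ => c * k * (k*x*(Real.cosh (k*x))^2 - 2*(k*x)*(Real.sinh (k*x))^2
      + 2*Real.sinh (k*x)*Real.cosh (k*x)))
      (c * k * ((k*(Real.cosh (k*x))^2 + k*x*(2*(Real.cosh (k*x))^1*(Real.sinh (k*x)*k)))
        - (2*k*(Real.sinh (k*x))^2 + 2*(k*x)*(2*(Real.sinh (k*x))^1*(Real.cosh (k*x)*k)))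
        + ((2*(Real.cosh (k*x)*k))*Real.cosh (k*x) + 2*Real.sinh (k*x)*(Real.sinh (k*x)*k)))) x := by
    refine HasDerivAt.const_mul _ ?_
    refine HasDerivAt.add ?_ ((hS.const_mul 2).mul hC)
    refine HasDerivAt.sub (hx.mul (hC.pow 2)) ?_
    have h2 : HasDerivAt (fun x : ℝ => 2*(k*x)) (2*k) x := hx.const_mul 2
    exact h2.mul (hS.pow 2)
  have hden : HasDerivAt (fun x : ℝ => (Real.cosh (k*x))^3)
      (3*(Real.cosh (k*x))^2*(Real.sinh (k*x)*k)) x := by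
    have := hC.pow 3; refine this.congr_deriv (Eq.symm ?_); norm_num
  have := hnum.div hden (by positivity)
  refine this.congr_deriv (Eq.symm ?_)
  unfold auxD
  have h := Real.cosh_sq_sub_sinh_sq (k*x)
  field_simp
  linear_combination (k^2*c*(6*(k*x)*Real.sinh (k*x) - 6*Real.cosh (k*x))) * h

lemma hasDerivAt_phiSol_omega (ω : ℝ) (h1 : 0 < 1 - ω^2) (x : ℝ) :
    HasDerivAt (fun μ : ℝ => phiSol μ x)
      (auxD (Real.sqrt 2 * ω / Real.sqrt (1-ω^2)) (Real.sqrt (1-ω^2)) x) ω := by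
  unfold auxD
  have hfun : (fun μ : ℝ => phiSol μ x)
      = fun μ : ℝ => Real.sqrt (2*(1-μ^2)) * (Real.cosh (Real.sqrt (1-μ^2)*x))⁻¹ := by
    funext μ; rw [phiSol, one_div]
  rw [hfun]
  have hk : 0 < Real.sqrt (1-ω^2) := Real.sqrt_pos.mpr h1
  have hu : HasDerivAt (fun μ : ℝ => 1 - μ^2) (-(2*ω)) ω := by
    simpa using (hasDerivAt_pow 2 ω).const_sub 1
  have hu2 : HasDerivAt (fun μ : ℝ => 2*(1 - μ^2)) (2*(-(2*ω))) ω := hu.const_mul 2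
  have hsq1 : HasDerivAt (fun μ : ℝ => Real.sqrt (2*(1-μ^2)))
      (1/(2*Real.sqrt (2*(1-ω^2))) * (2*(-(2*ω)))) ω :=
    (Real.hasDerivAt_sqrt (by positivity)).comp ω hu2
  have hsq2 : HasDerivAt (fun μ : ℝ => Real.sqrt (1-μ^2)) (1/(2*Real.sqrt (1-ω^2)) * (-(2*ω))) ω :=
    (Real.hasDerivAt_sqrt h1.ne').comp ω hu
  have hv : HasDerivAt (fun μ : ℝ => Real.sqrt (1-μ^2) * x)
      ((1/(2*Real.sqrt (1-ω^2)) * (-(2*ω))) * x) ω := hsq2.mul_const x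
  have hcosh := hv.cosh
  have hinv := hcosh.inv (Real.cosh_pos _).ne'
  have htot := hsq1.mul hinv
  refine htot.congr_deriv (Eq.symm ?_)
  have hsm : Real.sqrt (2*(1-ω^2)) = Real.sqrt 2 * Real.sqrt (1-ω^2) :=
    Real.sqrt_mul (by norm_num) _
  have hs2 : Real.sqrt 2 * Real.sqrt 2 = 2 := Real.mul_self_sqrt (by norm_num)
  have hs2pos : (0:ℝ) < Real.sqrt 2 := by positivity
  have hcp : (0:ℝ) < Real.cosh (Real.sqrt (1-ω^2)*x) := Real.cosh_pos _
  rw [hsm]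
  simp only [Pi.inv_apply]
  field_simp
  linear_combination (-ω*Real.cosh (Real.sqrt (1-ω^2)*x)) * hs2

lemma hasDerivAt_auxH (c k x : ℝ) : HasDerivAt (auxH c k) (auxf c k x) x := by
  have hx := hasDerivAt_kx k x
  have hC := hx.cosh
  have hcp := (Real.cosh_pos (k*x)).ne'
  have h1 := (hasDerivAt_auxDd c k x).mul (hasDerivAt_auxD c k x)
  have htanh := hasDerivAt_tanhlike k x
  have hkx : HasDerivAt (fun x : ℝ => k*x/(Real.cosh (k*x))^2)
      ((k*(Real.cosh (k*x))^2 - k*x*(2*(Real.cosh (k*x))^1*(Real.sinh (k*x)*k)))/((Real.cosh (k*x))^2)^2) x :=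
    hx.div (hC.pow 2) (by positivity)
  have h2 := (htanh.add hkx).const_mul (c^2*k)
  have hfin := h1.sub h2
  refine hfin.congr_deriv (Eq.symm ?_)
  unfold auxf auxD auxDd
  field_simp
  ring

lemma auxH_eq (c k : ℝ) (x : ℝ) :
    auxH c k x = c*k*((k*x*(Real.cosh (k*x))⁻¹) - 2*((k*x)*(Real.cosh (k*x))⁻¹)*(Real.sinh (k*x)/Real.cosh (k*x))^2
        + 2*(Real.sinh (k*x)/Real.cosh (k*x))*(Real.cosh (k*x))⁻¹)
      * (c*((k*x*(Real.cosh (k*x))⁻¹)*(Real.sinh (k*x)/Real.cosh (k*x)) - (Real.cosh (k*x))⁻¹))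
      - c^2*k*((Real.sinh (k*x)/Real.cosh (k*x)) + ((k*x)*(Real.cosh (k*x))⁻¹)*(Real.cosh (k*x))⁻¹) := by
  have hcp := (Real.cosh_pos (k*x)).ne'
  unfold auxH auxD auxDd
  field_simp

lemma tendsto_auxH (c k : ℝ) (hk : 0 < k) :
    Tendsto (auxH c k) atTop (𝓝 (-(c^2*k))) ∧ Tendsto (auxH c k) atBot (𝓝 (c^2*k)) := by
  have hcont : Continuous (fun p : (ℝ×ℝ)×ℝ =>
      c*k*(p.1.1 - 2*p.1.1*p.1.2^2 + 2*p.1.2*p.2)*(c*(p.1.1*p.1.2 - p.2))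
        - c^2*k*(p.1.2 + p.1.1*p.2)) := by fun_prop
  constructor
  · have hin : Tendsto (fun x : ℝ => k*x) atTop atTop := tendsto_id.const_mul_atTop hk
    have ha : Tendsto (fun x : ℝ => (k*x)*(Real.cosh (k*x))⁻¹) atTop (𝓝 0) :=
      tendsto_mul_inv_cosh_atTop.comp hin
    have hb : Tendsto (fun x : ℝ => (Real.cosh (k*x))⁻¹) atTop (𝓝 0) :=
      tendsto_inv_cosh_atTop.comp hin
    have ht : Tendsto (fun x : ℝ => Real.sinh (k*x)/Real.cosh (k*x)) atTop (𝓝 1) :=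
      tendsto_sinh_div_cosh_atTop.comp hin
    have hvec := ((ha.prodMk ht).prodMk hb)
    rw [← nhds_prod_eq, ← nhds_prod_eq] at hvec
    have hlim := (hcont.tendsto (((0:ℝ),(1:ℝ)),(0:ℝ))).comp hvec
    have : Tendsto (auxH c k) atTop
        (𝓝 (c*k*(0 - 2*0*1^2 + 2*1*0)*(c*(0*1 - 0)) - c^2*k*(1 + 0*0))) :=
      hlim.congr fun x => (auxH_eq c k x).symm
    convert this using 2
    norm_num
  · have hin : Tendsto (fun x : ℝ => k*x) atBot atBot := tendsto_id.const_mul_atBot hk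
    have ha : Tendsto (fun x : ℝ => (k*x)*(Real.cosh (k*x))⁻¹) atBot (𝓝 0) :=
      tendsto_mul_inv_cosh_atBot.comp hin
    have hb : Tendsto (fun x : ℝ => (Real.cosh (k*x))⁻¹) atBot (𝓝 0) :=
      tendsto_inv_cosh_atBot.comp hin
    have ht : Tendsto (fun x : ℝ => Real.sinh (k*x)/Real.cosh (k*x)) atBot (𝓝 (-1)) :=
      tendsto_sinh_div_cosh_atBot.comp hin
    have hvec := ((ha.prodMk ht).prodMk hb)
    rw [← nhds_prod_eq, ← nhds_prod_eq] at hvec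
    have hlim := (hcont.tendsto (((0:ℝ),(-1:ℝ)),(0:ℝ))).comp hvec
    have : Tendsto (auxH c k) atBot
        (𝓝 (c*k*(0 - 2*0*(-1)^2 + 2*(-1)*0)*(c*(0*(-1) - 0)) - c^2*k*((-1) + 0*0))) :=
      hlim.congr fun x => (auxH_eq c k x).symm
    convert this using 2
    norm_num

set_option maxHeartbeats 2000000 in
lemma auxf_bound (c k : ℝ) (hk : 0 < k) (hk1 : k ≤ 1) (hc2 : c^2*k^2 ≤ 2) (x : ℝ) :
    |auxf c k x| ≤ 512/k^2 * (1+x^2)⁻¹ := by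
  have hC1 : 1 ≤ Real.cosh (k*x) := Real.one_le_cosh _
  have hq : 1 + (k*x)^2/4 ≤ Real.cosh (k*x) := cosh_quad _
  have hS2 : Real.sinh (k*x)^2 = Real.cosh (k*x)^2 - 1 := Real.sinh_sq _
  have hC0 : (0:ℝ) < Real.cosh (k*x) := Real.cosh_pos _
  set S := Real.sinh (k*x) with hSdef
  set C := Real.cosh (k*x) with hCdef
  set y := k*x with hydef
  set N := y*C^2 - 2*y*S^2 + 2*S*C with hNdef
  set M := N^2 + ((y*S - C)^2*C^2 - 6*(y*S-C)^2) with hMdef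
  have haux : auxf c k x = c^2*k^2*M/C^6 := by
    unfold auxf auxD auxDd
    rw [hMdef, hNdef, hydef, hSdef, hCdef]
    field_simp
    ring
  have hN : N^2 ≤ (2*y^2+8)*C^4 := by
    rw [hNdef]
    nlinarith [sq_nonneg (y*(C^2-2*S^2) - 2*S*C), sq_nonneg (y*S), sq_nonneg (S*C),
      sq_nonneg y, hS2, hC1, sq_nonneg S, sq_nonneg C]
  have hQ : (y*S-C)^2 ≤ (2*y^2+2)*C^2 := by
    nlinarith [sq_nonneg (y*S+C), hS2, sq_nonneg y, hC1]
  have hC24 : C^2 ≤ C^4 := by nlinarith [hC1]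
  have hMu : M ≤ 16*(1+y^2)*C^4 := by
    rw [hMdef]
    nlinarith [hN, hQ, sq_nonneg (y*S-C), hC1, sq_nonneg y, hC24]
  have hMl : -(16*(1+y^2)*C^4) ≤ M := by
    rw [hMdef]
    nlinarith [hQ, sq_nonneg N, hC1, sq_nonneg y, hC24, sq_nonneg (y*S-C)]
  have hck : (0:ℝ) ≤ c^2*k^2 := by positivity
  have hB0 : (0:ℝ) ≤ 16*(1+y^2)*C^4 := by positivity
  have hPu : c^2*k^2*M ≤ 32*((1+y^2)*C^4) := by
    rcases le_or_gt 0 M with hM0 | hM0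
    · calc c^2*k^2*M ≤ 2*M := mul_le_mul_of_nonneg_right hc2 hM0
      _ ≤ 32*((1+y^2)*C^4) := by linarith [hMu]
    · calc c^2*k^2*M ≤ 0 := mul_nonpos_of_nonneg_of_nonpos hck hM0.le
      _ ≤ 32*((1+y^2)*C^4) := by linarith
  have hPl : -(32*((1+y^2)*C^4)) ≤ c^2*k^2*M := by
    rcases le_or_gt 0 M with hM0 | hM0
    · calc -(32*((1+y^2)*C^4)) ≤ 0 := by linarith
      _ ≤ c^2*k^2*M := mul_nonneg hck hM0
    · calc -(32*((1+y^2)*C^4)) ≤ 2*M := by nlinarith [hMl]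
      _ ≤ c^2*k^2*M := by nlinarith [hc2, hck, hM0]
  have hkx2 : k^2*(1+x^2) ≤ 1 + y^2 := by rw [hydef]; nlinarith [hk1, hk, sq_nonneg x]
  have h4C : 1 + y^2 ≤ 4*C := by nlinarith [hq]
  have habs : |c^2*k^2*M| ≤ 32*((1+y^2)*C^4) := abs_le.mpr ⟨hPl, hPu⟩
  rw [haux, abs_div, abs_of_pos (by positivity : (0:ℝ) < C^6),
    div_le_iff₀ (by positivity : (0:ℝ) < C^6)]
  refine le_trans habs ?_
  have hrhs : 512/k^2*(1+x^2)⁻¹*C^6 = 512*C^6/(k^2*(1+x^2)) := by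
    field_simp
  rw [hrhs, le_div_iff₀ (by positivity : (0:ℝ) < k^2*(1+x^2))]
  have h32 : (0:ℝ) ≤ 32*((1+y^2)*C^4) := by positivity
  nlinarith [mul_le_mul_of_nonneg_left hkx2 h32,
    mul_nonneg (sub_nonneg.mpr h4C) (by positivity : (0:ℝ) ≤ (4*C + (1+y^2))*C^4),
    pow_pos hC0 4, pow_pos hC0 2]

lemma continuous_auxf (c k : ℝ) : Continuous (auxf c k) := by
  unfold auxf auxD auxDd
  have hne : ∀ x : ℝ, Real.cosh (k*x) ≠ 0 := fun x => (Real.cosh_pos _).ne'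
  fun_prop (disch := intros; first | exact hne _ | positivity)

lemma integral_auxf (c k : ℝ) (hk : 0 < k) (hk1 : k ≤ 1) (hc2 : c^2*k^2 ≤ 2) :
    Integrable (auxf c k) ∧ ∫ x : ℝ, auxf c k x = -(2*c^2*k) := by
  have hint : Integrable (auxf c k) := by
    apply Integrable.mono' ((integrable_inv_one_add_sq).const_mul (512/k^2))
    · exact (continuous_auxf c k).aestronglyMeasurable
    · exact Eventually.of_forall fun x => by
        rw [Real.norm_eq_abs]; exact auxf_bound c k hk hk1 hc2 x
  refine ⟨hint, ?_⟩
  obtain ⟨htop, hbot⟩ := tendsto_auxH c k hk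
  have hval := integral_of_hasDerivAt_of_tendsto (fun x => hasDerivAt_auxH c k x) hint hbot htop
  rw [hval]; ring

/-- The partial derivative of the soliton family with respect to the frequency `ω`. -/
noncomputable def dphiSol (ω : ℝ) (x : ℝ) : ℝ := deriv (fun μ : ℝ => phiSol μ x) ω

/-- The Hessian quadratic form of the action `S_ω = E - ωQ` at the standing wave,
restricted to states with vanishing fourth component. -/
noncomputable def hessianForm (ω : ℝ) (ξ η : ℝ → ℂ) (ζ : ℝ → ℝ) : ℝ :=
  ∫ x : ℝ, (‖deriv ξ x‖ ^ 2 + ‖ξ x‖ ^ 2 + ‖η x‖ ^ 2 + (1 / 2) * (ζ x) ^ 2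
    - (phiSol ω x) ^ 2 * ‖ξ x‖ ^ 2 + 2 * phiSol ω x * ζ x * (ξ x).re
    - 2 * ω * (η x * (starRingEnd ℂ) (ξ x)).im)

/-- For `ω ≠ 0`, the Hessian of the action is negative in the direction
`F_ω = (∂_ωφ_ω, iω∂_ωφ_ω, -2φ_ω∂_ωφ_ω)`:
`B(F_ω) = ω·(d/dω)∫φ_ω² = -(ω²/√(1-ω²))·∫φ₀² < 0`. -/
theorem hessianForm_neg_direction (ω : ℝ) (hω : ω ∈ Ioo (-1 : ℝ) 1) (hω0 : ω ≠ 0) :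
    hessianForm ω (fun x => ((dphiSol ω x : ℝ) : ℂ))
        (fun x => Complex.I * (ω : ℂ) * (dphiSol ω x : ℂ))
        (fun x => -2 * phiSol ω x * dphiSol ω x)
      = ω * deriv (fun μ : ℝ => ∫ x : ℝ, (phiSol μ x) ^ 2) ω ∧
    hessianForm ω (fun x => ((dphiSol ω x : ℝ) : ℂ))
        (fun x => Complex.I * (ω : ℂ) * (dphiSol ω x : ℂ))
        (fun x => -2 * phiSol ω x * dphiSol ω x)
      = -(ω ^ 2 / Real.sqrt (1 - ω ^ 2)) * (∫ x : ℝ, (phiSol 0 x) ^ 2) ∧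
    hessianForm ω (fun x => ((dphiSol ω x : ℝ) : ℂ))
        (fun x => Complex.I * (ω : ℂ) * (dphiSol ω x : ℂ))
        (fun x => -2 * phiSol ω x * dphiSol ω x) < 0 := by
  obtain ⟨hω1, hω2⟩ := hω
  have h1 : 0 < 1 - ω^2 := by nlinarith
  have hωsq : ω^2 ≤ 1 := by nlinarith
  have hk0 : 0 < Real.sqrt (1-ω^2) := Real.sqrt_pos.mpr h1
  set k := Real.sqrt (1-ω^2) with hkdef
  have hk : 0 < k := hk0
  have hk2 : k^2 = 1-ω^2 := Real.sq_sqrt h1.le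
  have hk1 : k ≤ 1 := by nlinarith
  have hs2 : Real.sqrt 2 * Real.sqrt 2 = 2 := Real.mul_self_sqrt (by norm_num)
  set c := Real.sqrt 2 * ω / k with hcdef
  have hck : c*k = Real.sqrt 2 * ω := by rw [hcdef]; field_simp
  have hc2eq : c^2*k^2 = 2*ω^2 := by
    have : c^2*k^2 = (c*k)^2 := by ring
    rw [this, hck]
    nlinarith [hs2]
  have hc2 : c^2*k^2 ≤ 2 := by nlinarith [hc2eq]
  have hDval : dphiSol ω = auxD c k := by
    funext x
    exact (hasDerivAt_phiSol_omega ω h1 x).deriv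
  have hphi : ∀ x, phiSol ω x = Real.sqrt 2 * k * (Real.cosh (k*x))⁻¹ := by
    intro x
    rw [phiSol, Real.sqrt_mul (by norm_num : (0:ℝ) ≤ 2), one_div, ← hkdef]
  have hderiv_xi : ∀ x : ℝ, deriv (fun x => ((dphiSol ω x : ℝ) : ℂ)) x = ((auxDd c k x : ℝ) : ℂ) := by
    intro x
    rw [hDval]
    exact ((hasDerivAt_auxD c k x).ofReal_comp).deriv
  have hform : hessianForm ω (fun x => ((dphiSol ω x : ℝ) : ℂ))
        (fun x => Complex.I * (ω : ℂ) * (dphiSol ω x : ℂ))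
        (fun x => -2 * phiSol ω x * dphiSol ω x) = ∫ x : ℝ, auxf c k x := by
    unfold hessianForm
    refine integral_congr_ae (Eventually.of_forall fun x => ?_)
    beta_reduce
    rw [hderiv_xi x, hDval]
    have hp2 : (phiSol ω x)^2 = 2*k^2*((Real.cosh (k*x))⁻¹)^2 := by
      rw [hphi x]
      linear_combination (k^2 * ((Real.cosh (k*x))⁻¹)^2) * hs2
    simp only [norm_mul, Complex.norm_I, Complex.norm_real, Real.norm_eq_abs,
      Complex.conj_ofReal, Complex.ofReal_re, Complex.mul_im, Complex.mul_re,
      Complex.I_re, Complex.I_im, Complex.ofReal_im, one_mul, zero_mul, mul_zero,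
      zero_sub, sub_zero, zero_add, mul_pow, _root_.sq_abs]
    unfold auxf
    linear_combination (-(auxD c k x)^2) * hk2 + (-3*(auxD c k x)^2) * hp2
  have hval : hessianForm ω (fun x => ((dphiSol ω x : ℝ) : ℂ))
        (fun x => Complex.I * (ω : ℂ) * (dphiSol ω x : ℂ))
        (fun x => -2 * phiSol ω x * dphiSol ω x) = -4*ω^2/k := by
    rw [hform, (integral_auxf c k hk hk1 hc2).2]
    rw [show -(2*c^2*k) = -(2*(c^2*k^2)/k) by field_simp, hc2eq]
    ring
  have hu : HasDerivAt (fun μ : ℝ => 1-μ^2) (-(2*ω)) ω := by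
    simpa using (hasDerivAt_pow 2 ω).const_sub 1
  refine ⟨?_, ?_, ?_⟩
  · rw [hval]
    have hfun2 : (fun μ : ℝ => ∫ x : ℝ, (phiSol μ x)^2)
        = (fun μ : ℝ => 4*Real.sqrt (1-μ^2)) := funext fun μ => integral_phiSol_sq μ
    rw [hfun2]
    have hd : HasDerivAt (fun μ : ℝ => 4*Real.sqrt (1-μ^2))
        (4*(1/(2*Real.sqrt (1-ω^2)) * (-(2*ω)))) ω :=
      ((Real.hasDerivAt_sqrt h1.ne').comp ω hu).const_mul 4
    rw [hd.deriv, ← hkdef]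
    field_simp
  · rw [hval, integral_phiSol_sq 0]
    norm_num
    ring
  · rw [hval]
    have hω2pos : 0 < ω^2 := by positivity
    apply div_neg_of_neg_of_pos (by nlinarith) hk
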